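/- arXiv:math-ph/0412010 — 2 statements merged into one kernel-verified Lean document; each statement's English description precedes it below -/
import Mathlib

section
/- Confluence of the hypergeometric seed function: fix an integer N ≥ 1, n ∈ ℤ_{≥0}, complex parameters θ_2, …, θ_N, θ_{N+1}, θ_{N+2}, θ_{N+3} with −θ_{N+1} − θ_{N+3} − n + 1 not a nonpositive integer, a point t_1 ∈ ℂ, and t_2, …, t_N ∈ ℂ with |t_j| < 1 for j = 2, …, N. Then lim_{ε → 0⁺, ε ∈ ℝ} (θ_{N+2} − 1/ε − n)(θ_{N+3} + n) · (ε t_1) · (1 − ε t_1)^{−(θ_{N+2} − 1/ε + θ_{N+3} + 1)} · F_D(−θ_{N+3} − n, 1/ε, θ_2, …, θ_N, −θ_{N+1} − θ_{N+3} − n + 1; ε t_1, t_2, …, t_N) = −(θ_{N+3} + n) · t_1 · e^{−t_1} · Φ_D(−θ_{N+3} − n, θ_2, …, θ_N, −θ_{N+1} − θ_{N+3} − n + 1; t_1, t_2, …, t_N). Here for |w| < 1 and c ∈ ℂ, (1 − w)^c denotes exp(c · Log(1 − w)) with the principal logarithm. (That is, under the confluence substitution θ_1 ↦ 1/ε, θ_{N+2}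 ↦ θ_{N+2} − 1/ε, t_1 ↦ ε t_1, the function σ^{(1)}_{1,n} tends to −σ^{(2)}_{1,n} as ε → 0⁺.) -/
/-- The general term of the Lauricella hypergeometric series `F_D`:
`(α)_{|m|} (β_1)_{m_1} ⋯ (β_N)_{m_N} / ((γ)_{|m|} (1)_{m_1} ⋯ (1)_{m_N}) · t^m`. -/
noncomputable def lauricellaFDTerm {N : ℕ} (α γ : ℂ) (β t : Fin N → ℂ)
    (m : Fin N → ℕ) : ℂ :=
  ((ascPochhammer ℂ (∑ i, m i)).eval α *
      ∏ i, (ascPochhammer ℂ (m i)).eval (β i)) /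
    ((ascPochhammer ℂ (∑ i, m i)).eval γ * ∏ i, (Nat.factorial (m i) : ℂ)) *
    ∏ i, t i ^ m i

/-- The general term of the degenerate Lauricella series `Φ_D` (the entry `β 0`,
i.e. "β_1", does not occur). -/
noncomputable def phiDTerm {N : ℕ} (hN : 0 < N) (α γ : ℂ) (β : Fin N → ℂ)
    (t : Fin N → ℂ) (m : Fin N → ℕ) : ℂ :=
  ((ascPochhammer ℂ (∑ i, m i)).eval α *
      ∏ i ∈ Finset.univ.erase (⟨0, hN⟩ : Fin N), (ascPochhammer ℂ (m i)).eval (β i)) /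
    ((ascPochhammer ℂ (∑ i, m i)).eval γ * ∏ i, (Nat.factorial (m i) : ℂ)) *
    ∏ i, t i ^ m i

open Finset Filter Complex
open scoped Topology

lemma poch_eval_eq_prod {S : Type*} [CommSemiring S] (n : ℕ) (x : S) :
    (ascPochhammer S n).eval x = ∏ k ∈ Finset.range n, (x + k) := by
  induction n with
  | zero => simp
  | succ n ih => rw [ascPochhammer_succ_eval, ih, Finset.prod_range_succ]

lemma stepA {N : ℕ} (hN : 0 < N) (α γ : ℂ) (β t : Fin N → ℂ) {ε : ℝ} (hε : ε ≠ 0)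
    (m : Fin N → ℕ) :
    lauricellaFDTerm α γ (Function.update β ⟨0,hN⟩ ((ε:ℂ)⁻¹))
        (Function.update t ⟨0,hN⟩ ((ε:ℂ) * t ⟨0,hN⟩)) m
      = (∏ j ∈ Finset.range (m ⟨0,hN⟩), (1 + (j:ℂ) * (ε:ℂ))) * phiDTerm hN α γ β t m := by
  set z : Fin N := ⟨0, hN⟩
  have hεC : (ε:ℂ) ≠ 0 := by exact_mod_cast hε
  have hβ : ∏ i, (ascPochhammer ℂ (m i)).eval (Function.update β z ((ε:ℂ)⁻¹) i)
      = (∏ j ∈ Finset.range (m z), ((ε:ℂ)⁻¹ + j)) *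
        ∏ i ∈ Finset.univ.erase z, (ascPochhammer ℂ (m i)).eval (β i) := by
    rw [← Finset.mul_prod_erase Finset.univ _ (Finset.mem_univ z), Function.update_self,
      poch_eval_eq_prod]
    congr 1
    exact Finset.prod_congr rfl fun i hi => by
      rw [Function.update_of_ne (Finset.ne_of_mem_erase hi)]
  have htp : ∏ i, (Function.update t z ((ε:ℂ) * t z) i) ^ m i
      = ((ε:ℂ) * t z) ^ m z * ∏ i ∈ Finset.univ.erase z, t i ^ m i := by
    rw [← Finset.mul_prod_erase Finset.univ _ (Finset.mem_univ z), Function.update_self]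
    congr 1
    exact Finset.prod_congr rfl fun i hi => by
      rw [Function.update_of_ne (Finset.ne_of_mem_erase hi)]
  have htp2 : ∏ i, t i ^ m i = (t z) ^ m z * ∏ i ∈ Finset.univ.erase z, t i ^ m i :=
    (Finset.mul_prod_erase Finset.univ _ (Finset.mem_univ z)).symm
  have hkey : (∏ j ∈ Finset.range (m z), ((ε:ℂ)⁻¹ + j)) * ((ε:ℂ) * t z) ^ m z
      = (∏ j ∈ Finset.range (m z), (1 + (j:ℂ) * (ε:ℂ))) * (t z) ^ m z := by
    rw [mul_pow, ← mul_assoc]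
    congr 1
    have hpow : (ε:ℂ)^(m z) = ∏ _j ∈ Finset.range (m z), (ε:ℂ) := by
      rw [Finset.prod_const, Finset.card_range]
    rw [hpow, ← Finset.prod_mul_distrib]
    exact Finset.prod_congr rfl fun j _ => by field_simp
  have alg : ∀ (A P G Fac T Q c w v : ℂ), Q * w = c * v →
      (A * (Q * P)) / (G * Fac) * (w * T) = c * ((A * P) / (G * Fac) * (v * T)) := by
    intro A P G Fac T Q c w v hk
    have h1 : (A * (Q * P)) / (G * Fac) * (w * T) = (Q * w) * ((A * P) / (G * Fac) * T) := by
      ring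
    rw [h1, hk]; ring
  unfold lauricellaFDTerm phiDTerm
  rw [hβ, htp, htp2]
  exact alg _ _ _ _ _ _ _ _ _ hkey

lemma poch_norm_pos {γ : ℂ} (hγ : ∀ k : ℕ, γ + k ≠ 0) (M : ℕ) :
    0 < ‖(ascPochhammer ℂ M).eval γ‖ := by
  rw [norm_pos_iff, poch_eval_eq_prod]
  exact Finset.prod_ne_zero_iff.2 fun k _ => hγ k

lemma ratio_aux (α γ : ℂ) (D K : ℕ) (C : ℝ)
    (hbase : ∀ M : ℕ, M ≤ K →
      ‖(ascPochhammer ℂ M).eval α‖ ≤ C * ((M:ℝ)+1)^D * ‖(ascPochhammer ℂ M).eval γ‖)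
    (hstep : ∀ k : ℕ, K ≤ k → ‖α + k‖ * ((k:ℝ)+1)^D ≤ ((k:ℝ)+2)^D * ‖γ + k‖)
    (hC : 0 ≤ C) : ∀ M : ℕ,
      ‖(ascPochhammer ℂ M).eval α‖ ≤ C * ((M:ℝ)+1)^D * ‖(ascPochhammer ℂ M).eval γ‖ := by
  intro M
  induction M with
  | zero => exact hbase 0 (by omega)
  | succ M ih =>
    rcases le_or_gt (M+1) K with h | h
    · exact hbase (M+1) h
    · have hMK : K ≤ M := by omega
      rw [ascPochhammer_succ_eval, ascPochhammer_succ_eval, norm_mul, norm_mul]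
      have hs := hstep M hMK
      calc ‖(ascPochhammer ℂ M).eval α‖ * ‖α + M‖
          ≤ (C * ((M:ℝ)+1)^D * ‖(ascPochhammer ℂ M).eval γ‖) * ‖α + M‖ := by
            apply mul_le_mul_of_nonneg_right ih (norm_nonneg _)
        _ = (C * ‖(ascPochhammer ℂ M).eval γ‖) * (‖α + M‖ * ((M:ℝ)+1)^D) := by ring
        _ ≤ (C * ‖(ascPochhammer ℂ M).eval γ‖) * (((M:ℝ)+2)^D * ‖γ + M‖) := by
            apply mul_le_mul_of_nonneg_left hs (by positivity)
        _ = C * (((M+1:ℕ):ℝ)+1)^D * (‖(ascPochhammer ℂ M).eval γ‖ * ‖γ + M‖) := by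
            push_cast; ring

/-- Lemma R: ratio bound for Pochhammer norms. -/
lemma poch_ratio_bound (α γ : ℂ) (hγ : ∀ k : ℕ, γ + k ≠ 0) :
    ∃ C : ℝ, 0 < C ∧ ∃ D : ℕ, ∀ M : ℕ,
      ‖(ascPochhammer ℂ M).eval α‖ ≤ C * ((M:ℝ)+1)^D * ‖(ascPochhammer ℂ M).eval γ‖ := by
  obtain ⟨a, ha⟩ : ∃ a, a = ‖α‖ := ⟨_, rfl⟩
  obtain ⟨g, hg⟩ : ∃ g, g = ‖γ‖ := ⟨_, rfl⟩
  obtain ⟨D, hDge⟩ : ∃ D : ℕ, 2*(a+g) ≤ (D:ℝ) := ⟨⌈2*(a+g)⌉₊, Nat.le_ceil _⟩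
  obtain ⟨K, hKge⟩ : ∃ K : ℕ, 2*g + 2 ≤ (K:ℝ) := ⟨⌈2*g⌉₊+2, by
    have := Nat.le_ceil (2*g); push_cast; linarith⟩
  obtain ⟨S, hS0, hSle⟩ : ∃ S : ℝ, 0 ≤ S ∧ ∀ M : ℕ, M ≤ K →
      ‖(ascPochhammer ℂ M).eval α‖ / (((M:ℝ)+1)^D * ‖(ascPochhammer ℂ M).eval γ‖) ≤ S := by
    refine ⟨∑ M ∈ Finset.range (K+1),
      ‖(ascPochhammer ℂ M).eval α‖ / (((M:ℝ)+1)^D * ‖(ascPochhammer ℂ M).eval γ‖),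
      Finset.sum_nonneg fun M _ => by positivity, fun M hM => ?_⟩
    exact Finset.single_le_sum (f := fun M' => ‖(ascPochhammer ℂ M').eval α‖ /
      (((M':ℝ)+1)^D * ‖(ascPochhammer ℂ M').eval γ‖))
      (fun M' _ => by positivity) (Finset.mem_range.2 (by omega))
  refine ⟨S + 1, by linarith, D, ?_⟩
  apply ratio_aux α γ D K _ ?_ ?_ (by linarith)
  · intro M hM
    have hγp := poch_norm_pos hγ M
    have hX : (0:ℝ) < ((M:ℝ)+1)^D * ‖(ascPochhammer ℂ M).eval γ‖ := by positivity
    have h1 := hSle M hM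
    calc ‖(ascPochhammer ℂ M).eval α‖
        = (‖(ascPochhammer ℂ M).eval α‖ / (((M:ℝ)+1)^D * ‖(ascPochhammer ℂ M).eval γ‖)) *
          (((M:ℝ)+1)^D * ‖(ascPochhammer ℂ M).eval γ‖) := by
          rw [div_mul_cancel₀ _ (ne_of_gt hX)]
      _ ≤ (S+1) * (((M:ℝ)+1)^D * ‖(ascPochhammer ℂ M).eval γ‖) := by
          apply mul_le_mul_of_nonneg_right (by linarith) (le_of_lt hX)
      _ = (S+1) * ((M:ℝ)+1)^D * ‖(ascPochhammer ℂ M).eval γ‖ := by ring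
  · intro k hk
    have hk' : 2*g + 2 ≤ (k:ℝ) := le_trans hKge (by exact_mod_cast hk)
    have hg0 : 0 ≤ g := hg ▸ norm_nonneg _
    have ha0 : 0 ≤ a := ha ▸ norm_nonneg _
    have hγk : (k:ℝ) - g ≤ ‖γ + k‖ := by
      have h := norm_sub_norm_le ((k:ℂ)) (-γ)
      rw [sub_neg_eq_add, norm_neg] at h
      have hn : ‖(k:ℂ)‖ = (k:ℝ) := by simp
      rw [hn, ← hg] at h
      rw [add_comm γ ((k:ℂ))]
      linarith
    have hαk : ‖α + k‖ ≤ a + k := by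
      calc ‖α + (k:ℂ)‖ ≤ ‖α‖ + ‖(k:ℂ)‖ := norm_add_le _ _
        _ = a + k := by simp [ha]
    have hk1 : (0:ℝ) < (k:ℝ)+1 := by positivity
    have hbern : 1 + (D:ℝ)*(1/((k:ℝ)+1)) ≤ (1 + 1/((k:ℝ)+1))^D := by
      have h0 : (0:ℝ) ≤ 1/((k:ℝ)+1) := by positivity
      exact one_add_mul_le_pow (by linarith) D
    have hexp : ((k:ℝ)+2)^D = ((k:ℝ)+1)^D * (1 + 1/((k:ℝ)+1))^D := by
      rw [← mul_pow]; congr 1; field_simp; ring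
    have hhalf : (1:ℝ)/2 ≤ ((k:ℝ) - g)/((k:ℝ)+1) := by
      rw [le_div_iff₀ hk1]; linarith
    have hkg0 : 0 ≤ (k:ℝ) - g := by linarith
    calc ‖α + k‖ * ((k:ℝ)+1)^D ≤ (a + k) * ((k:ℝ)+1)^D := by
          apply mul_le_mul_of_nonneg_right hαk (by positivity)
      _ ≤ (((k:ℝ) - g) + (D:ℝ)*(((k:ℝ)-g)/((k:ℝ)+1))) * ((k:ℝ)+1)^D := by
          apply mul_le_mul_of_nonneg_right _ (by positivity)
          have h3 : (a+g) ≤ (D:ℝ)/2 := by linarith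
          have h2 : (D:ℝ)/2 ≤ (D:ℝ)*(((k:ℝ)-g)/((k:ℝ)+1)) := by
            have := mul_le_mul_of_nonneg_left hhalf (by positivity : (0:ℝ) ≤ (D:ℝ))
            linarith
          linarith
      _ = (((k:ℝ)-g) * (1 + (D:ℝ)*(1/((k:ℝ)+1)))) * ((k:ℝ)+1)^D := by field_simp
      _ ≤ (((k:ℝ)-g) * (1 + 1/((k:ℝ)+1))^D) * ((k:ℝ)+1)^D := by
          apply mul_le_mul_of_nonneg_right _ (by positivity)
          exact mul_le_mul_of_nonneg_left hbern hkg0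
      _ = ((k:ℝ)+2)^D * ((k:ℝ) - g) := by rw [hexp]; ring
      _ ≤ ((k:ℝ)+2)^D * ‖γ + k‖ := by
          apply mul_le_mul_of_nonneg_left hγk (by positivity)

lemma sumPoly (D : ℕ) {ρ : ℝ} (h0 : 0 ≤ ρ) (h1 : ρ < 1) :
    Summable (fun k : ℕ => ((k:ℝ)+1)^D * ρ^k) := by
  have hrw : ∀ k : ℕ, ((k:ℝ)+1)^D * ρ^k
      = ∑ j ∈ Finset.range (D+1), ((D.choose j : ℝ) * ((k:ℝ)^j * ρ^k)) := by
    intro k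
    rw [add_pow, Finset.sum_mul]
    apply Finset.sum_congr rfl
    intro j _
    simp [one_pow]
    ring
  simp_rw [hrw]
  apply summable_sum
  intro j _
  apply Summable.mul_left
  have := summable_pow_mul_geometric_of_norm_lt_one (R := ℝ) j (r := ρ) (by rwa [Real.norm_eq_abs, _root_.abs_of_nonneg h0])
  exact this

set_option maxHeartbeats 1000000 in

lemma summable_pi_prod : ∀ (N : ℕ) (f : Fin N → ℕ → ℝ), (∀ i k, 0 ≤ f i k) →
    (∀ i, Summable (f i)) → Summable (fun m : Fin N → ℕ => ∏ i, f i (m i)) := by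
  intro N
  induction N with
  | zero => intro f _ _; exact Summable.of_finite
  | succ N ih =>
    intro f hf0 hf
    rw [← (Fin.consEquiv (fun _ : Fin (N+1) => ℕ)).summable_iff]
    have hs : Summable (fun p : ℕ × (Fin N → ℕ) => f 0 p.1 * ∏ i : Fin N, f i.succ (p.2 i)) := by
      apply Summable.mul_of_nonneg (hf 0) (ih (fun i => f i.succ) (fun i k => hf0 _ _) (fun i => hf i.succ))
      · intro k; exact hf0 0 k
      · intro m; exact Finset.prod_nonneg fun i _ => hf0 _ _
    apply hs.congr
    intro p
    simp only [Function.comp_apply, Fin.consEquiv_apply]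
    rw [Fin.prod_univ_succ]
    simp [Fin.cons_zero, Fin.cons_succ]

lemma log_slope_tendsto (t1 : ℂ) :
    Tendsto (fun ε : ℝ => (ε:ℂ)⁻¹ * Complex.log (1 - (ε:ℂ) * t1))
      (𝓝[>] (0:ℝ)) (𝓝 (-t1)) := by
  have h1 : HasDerivAt (fun w : ℂ => 1 - w * t1) (-(1 * t1)) ((0:ℝ) : ℂ) :=
    ((hasDerivAt_id _).mul_const t1).const_sub 1
  have h3 : HasDerivAt (fun w : ℂ => Complex.log (1 - w * t1))
      (-(1 * t1) / (1 - ((0:ℝ):ℂ) * t1)) (((0:ℝ)):ℂ) :=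
    h1.clog (by simp)
  have h4 : HasDerivAt (fun y : ℝ => Complex.log (1 - (y:ℂ) * t1)) (-t1) 0 := by
    simpa using h3.comp_ofReal
  have h5 := hasDerivAt_iff_tendsto_slope.mp h4
  have h6 : Tendsto (slope (fun y : ℝ => Complex.log (1 - (y:ℂ) * t1)) 0) (𝓝[>] (0:ℝ)) (𝓝 (-t1)) :=
    h5.mono_left (nhdsWithin_mono 0 (fun x hx => ne_of_gt hx))
  apply h6.congr'
  filter_upwards [self_mem_nhdsWithin] with ε (hε : 0 < ε)
  simp only [slope, vsub_eq_sub, sub_zero]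
  rw [Complex.real_smul]
  push_cast
  simp [Complex.log_one]

lemma prefactor_tendsto (A K B t1 : ℂ) :
    Tendsto (fun ε : ℝ => (A - (ε:ℂ)⁻¹) * K * ((ε:ℂ) * t1) *
        Complex.exp (-(B - (ε:ℂ)⁻¹) * Complex.log (1 - (ε:ℂ) * t1)))
      (𝓝[>] (0:ℝ)) (𝓝 (-K * t1 * Complex.exp (-t1))) := by
  have hlog : Tendsto (fun ε : ℝ => Complex.log (1 - (ε:ℂ) * t1)) (𝓝[>] (0:ℝ)) (𝓝 0) := by
    have hc : Continuous fun ε : ℝ => 1 - (ε:ℂ) * t1 := by continuity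
    have h0 : Tendsto (fun ε : ℝ => 1 - (ε:ℂ) * t1) (𝓝 (0:ℝ)) (𝓝 1) := by
      have := hc.tendsto 0; simpa using this
    have hlc : ContinuousAt Complex.log 1 :=
      continuousAt_clog (by simp)
    have h2 : Tendsto (fun ε : ℝ => 1 - (ε:ℂ) * t1) (𝓝[>] (0:ℝ)) (𝓝 1) :=
      h0.mono_left nhdsWithin_le_nhds
    have := hlc.tendsto.comp h2
    simpa [Complex.log_one, Function.comp_def] using this
  -- exponent part
  have hE : Tendsto (fun ε : ℝ => -(B - (ε:ℂ)⁻¹) * Complex.log (1 - (ε:ℂ) * t1))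
      (𝓝[>] (0:ℝ)) (𝓝 (-t1)) := by
    have h1 : Tendsto (fun ε : ℝ => -B * Complex.log (1 - (ε:ℂ) * t1) +
        (ε:ℂ)⁻¹ * Complex.log (1 - (ε:ℂ) * t1)) (𝓝[>] (0:ℝ)) (𝓝 (-B * 0 + -t1)) :=
      ((hlog.const_mul (-B)).add (log_slope_tendsto t1))
    have h2 : (-B * 0 + -t1) = -t1 := by ring
    rw [h2] at h1
    apply h1.congr
    intro ε; ring
  have hexp : Tendsto (fun ε : ℝ => Complex.exp (-(B - (ε:ℂ)⁻¹) * Complex.log (1 - (ε:ℂ) * t1)))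
      (𝓝[>] (0:ℝ)) (𝓝 (Complex.exp (-t1))) :=
    (Complex.continuous_exp.tendsto _).comp hE
  -- polynomial part
  have hpoly : Tendsto (fun ε : ℝ => (A - (ε:ℂ)⁻¹) * K * ((ε:ℂ) * t1)) (𝓝[>] (0:ℝ))
      (𝓝 (-K * t1)) := by
    have hc : Continuous fun ε : ℝ => (A * (ε:ℂ) - 1) * K * t1 := by continuity
    have h0 : Tendsto (fun ε : ℝ => (A * (ε:ℂ) - 1) * K * t1) (𝓝 (0:ℝ)) (𝓝 (-K * t1)) := by
      have h := hc.tendsto 0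
      simp only [Complex.ofReal_zero, mul_zero, zero_sub, neg_mul, one_mul] at h
      simpa using h
    apply (h0.mono_left nhdsWithin_le_nhds).congr'
    filter_upwards [self_mem_nhdsWithin] with ε (hε : 0 < ε)
    have hε0 : (ε:ℂ) ≠ 0 := by exact_mod_cast ne_of_gt hε
    field_simp
  have := hpoly.mul hexp
  simpa using this
-- continuation; appended to big.lean for testing
lemma nat_sum_add_one_le_prod {N : ℕ} (m : Fin N → ℕ) :
    (∑ i, m i) + 1 ≤ ∏ i, (m i + 1) := by
  classical
  induction (Finset.univ : Finset (Fin N)) using Finset.induction_on with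
  | empty => simp
  | @insert a s ha ih =>
    rw [Finset.sum_insert ha, Finset.prod_insert ha]
    calc (m a + ∑ i ∈ s, m i) + 1 ≤ (m a + 1) * ((∑ i ∈ s, m i) + 1) := by nlinarith [Nat.zero_le (∑ i ∈ s, m i), Nat.zero_le (m a)]
      _ ≤ (m a + 1) * ∏ i ∈ s, (m i + 1) := Nat.mul_le_mul_left _ ih

lemma norm_poch_inv {ε : ℝ} (hε : 0 < ε) (k : ℕ) :
    ‖(ascPochhammer ℂ k).eval ((ε:ℂ)⁻¹)‖ = ∏ j ∈ Finset.range k, (ε⁻¹ + (j:ℝ)) := by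
  rw [poch_eval_eq_prod, norm_prod]
  apply Finset.prod_congr rfl
  intro j _
  have h : (ε:ℂ)⁻¹ + (j:ℂ) = ((ε⁻¹ + (j:ℝ) : ℝ) : ℂ) := by push_cast; ring
  rw [h, Complex.norm_real, Real.norm_eq_abs, _root_.abs_of_nonneg (by positivity)]

lemma prod_inv_mul_pow {ε : ℝ} (hε : 0 < ε) (k : ℕ) :
    (∏ j ∈ Finset.range k, (ε⁻¹ + (j:ℝ))) * ε ^ k = ∏ j ∈ Finset.range k, (1 + (j:ℝ) * ε) := by
  have hpow : ε ^ k = ∏ _j ∈ Finset.range k, ε := by rw [Finset.prod_const, Finset.card_range]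
  rw [hpow, ← Finset.prod_mul_distrib]
  exact Finset.prod_congr rfl fun j _ => by field_simp

lemma norm_FD {N : ℕ} (α γ : ℂ) (βx tx : Fin N → ℂ) (m : Fin N → ℕ) :
    ‖lauricellaFDTerm α γ βx tx m‖
      = (‖(ascPochhammer ℂ (∑ i, m i)).eval α‖ / ‖(ascPochhammer ℂ (∑ i, m i)).eval γ‖) *
        ∏ i, (‖(ascPochhammer ℂ (m i)).eval (βx i)‖ * ‖tx i‖ ^ m i / ((m i).factorial : ℝ)) := by
  simp only [lauricellaFDTerm, norm_mul, norm_div, norm_prod, norm_pow, Complex.norm_natCast]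
  rw [Finset.prod_div_distrib, Finset.prod_mul_distrib]
  ring

set_option maxHeartbeats 1000000 in
lemma tsum_tendsto {N : ℕ} (hN : 0 < N) (α γ : ℂ) (β t : Fin N → ℂ)
    (hγ : ∀ k : ℕ, γ + (k:ℂ) ≠ 0)
    (ht : ∀ i : Fin N, i ≠ ⟨0,hN⟩ → ‖t i‖ < 1) :
    Filter.Tendsto (fun ε : ℝ => ∑' m : Fin N → ℕ,
        lauricellaFDTerm α γ (Function.update β ⟨0,hN⟩ ((ε:ℂ)⁻¹))
          (Function.update t ⟨0,hN⟩ ((ε:ℂ) * t ⟨0,hN⟩)) m)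
      (𝓝[>] (0:ℝ)) (𝓝 (∑' m : Fin N → ℕ, phiDTerm hN α γ β t m)) := by
  classical
  set z : Fin N := ⟨0,hN⟩ with hz
  obtain ⟨C₁, hC₁, D₁, hR⟩ := poch_ratio_bound α γ hγ
  have h1 : ∀ k : ℕ, (1:ℂ) + (k:ℂ) ≠ 0 := by
    intro k
    have h : ((1+k:ℕ):ℂ) ≠ 0 := Nat.cast_ne_zero.2 (by omega)
    push_cast at h; simpa using h
  choose Cb hCb Db hBb using fun i : Fin N => poch_ratio_bound (β i) 1 h1
  have hpoch1 : ∀ k : ℕ, ‖(ascPochhammer ℂ k).eval (1:ℂ)‖ = (k.factorial : ℝ) := by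
    intro k; rw [ascPochhammer_eval_one]; simp
  -- epsilon zero
  set b : ℝ := ‖t z‖ with hb
  have hb0 : 0 ≤ b := norm_nonneg _
  set ε₀ : ℝ := min 1 (1/(2*(b+1))) with hε₀
  have hε₀pos : 0 < ε₀ := lt_min one_pos (by positivity)
  have hρz : ε₀ * b < 1 := by
    have h2 : ε₀ ≤ 1/(2*(b+1)) := min_le_right _ _
    have h3 : ε₀ * b ≤ (1/(2*(b+1))) * b := mul_le_mul_of_nonneg_right h2 hb0
    have h4 : (1/(2*(b+1))) * b < 1 := by
      rw [div_mul_eq_mul_div, div_lt_one (by positivity)]; nlinarith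
    linarith
  obtain ⟨C₀, hC₀, D₀, hB0⟩ := poch_ratio_bound ((ε₀:ℂ)⁻¹) 1 h1
  -- the dominating function
  set g : Fin N → ℕ → ℝ := fun i k => ((k:ℝ)+1)^D₁ *
    (if i = z then (∏ j ∈ Finset.range k, (1+(j:ℝ)*ε₀)) * b^k / k.factorial
     else ‖(ascPochhammer ℂ k).eval (β i)‖ * ‖t i‖^k / k.factorial) with hg
  have hg0 : ∀ i k, 0 ≤ g i k := by
    intro i k
    rw [hg]
    dsimp only
    split
    · have : (0:ℝ) ≤ ∏ j ∈ Finset.range k, (1+(j:ℝ)*ε₀) :=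
        Finset.prod_nonneg fun j _ => by positivity
      positivity
    · positivity
  have hprodnn : ∀ (e : ℝ) (k : ℕ), 0 ≤ e → (0:ℝ) ≤ ∏ j ∈ Finset.range k, (1+(j:ℝ)*e) :=
    fun e k he => Finset.prod_nonneg fun j _ => by positivity
  have hgsum : ∀ i, Summable (g i) := by
    intro i
    rcases eq_or_ne i z with hi | hi
    · apply Summable.of_nonneg_of_le (hg0 i) ?_
        ((sumPoly (D₁ + D₀) (by positivity) hρz).mul_left C₀)
      intro k
      rw [hg]; dsimp only; rw [if_pos hi]
      have hqq : ∏ j ∈ Finset.range k, (1+(j:ℝ)*ε₀)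
          = ‖(ascPochhammer ℂ k).eval ((ε₀:ℂ)⁻¹)‖ * ε₀^k := by
        rw [norm_poch_inv hε₀pos, prod_inv_mul_pow hε₀pos]
      have h2 : ‖(ascPochhammer ℂ k).eval ((ε₀:ℂ)⁻¹)‖ ≤ C₀ * ((k:ℝ)+1)^D₀ * k.factorial := by
        have h3 := hB0 k; rwa [hpoch1 k] at h3
      have hfac : (0:ℝ) < (k.factorial : ℝ) := by exact_mod_cast k.factorial_pos
      calc ((k:ℝ)+1)^D₁ * ((∏ j ∈ Finset.range k, (1+(j:ℝ)*ε₀)) * b^k / k.factorial)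
          = ((k:ℝ)+1)^D₁ * (‖(ascPochhammer ℂ k).eval ((ε₀:ℂ)⁻¹)‖ * ε₀^k * b^k / k.factorial) := by
            rw [hqq]
        _ ≤ ((k:ℝ)+1)^D₁ * ((C₀ * ((k:ℝ)+1)^D₀ * k.factorial) * ε₀^k * b^k / k.factorial) := by
            gcongr
        _ = C₀ * (((k:ℝ)+1)^(D₁+D₀) * (ε₀*b)^k) := by
            rw [pow_add, mul_pow]; field_simp
    · apply Summable.of_nonneg_of_le (hg0 i) ?_
        ((sumPoly (D₁ + Db i) (norm_nonneg _) (ht i hi)).mul_left (Cb i))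
      intro k
      rw [hg]; dsimp only; rw [if_neg hi]
      have h2 : ‖(ascPochhammer ℂ k).eval (β i)‖ ≤ Cb i * ((k:ℝ)+1)^(Db i) * k.factorial := by
        have h3 := hBb i k; rwa [hpoch1 k] at h3
      have hfac : (0:ℝ) < (k.factorial : ℝ) := by exact_mod_cast k.factorial_pos
      calc ((k:ℝ)+1)^D₁ * (‖(ascPochhammer ℂ k).eval (β i)‖ * ‖t i‖^k / k.factorial)
          ≤ ((k:ℝ)+1)^D₁ * ((Cb i * ((k:ℝ)+1)^(Db i) * k.factorial) * ‖t i‖^k / k.factorial) := by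
            gcongr
        _ = Cb i * (((k:ℝ)+1)^(D₁+Db i) * ‖t i‖^k) := by
            rw [pow_add]; field_simp
  -- bound
  have hbound : ∀ ε : ℝ, ε ∈ Set.Ioc 0 ε₀ → ∀ m : Fin N → ℕ,
      ‖lauricellaFDTerm α γ (Function.update β z ((ε:ℂ)⁻¹))
        (Function.update t z ((ε:ℂ) * t z)) m‖ ≤ C₁ * ∏ i, g i (m i) := by
    intro ε hε m
    obtain ⟨hε1, hε2⟩ := hε
    rw [norm_FD]
    have hGpos := poch_norm_pos hγ (∑ i, m i)
    have hAG : ‖(ascPochhammer ℂ (∑ i, m i)).eval α‖ / ‖(ascPochhammer ℂ (∑ i, m i)).eval γ‖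
        ≤ C₁ * (((∑ i, m i : ℕ):ℝ)+1)^D₁ := by
      rw [div_le_iff₀ hGpos]; exact hR _
    have hMprod : (((∑ i, m i : ℕ):ℝ)+1)^D₁ ≤ ∏ i, ((m i:ℝ)+1)^D₁ := by
      rw [Finset.prod_pow]
      apply pow_le_pow_left₀ (by positivity)
      have hnat := nat_sum_add_one_le_prod m
      calc ((∑ i, m i : ℕ):ℝ)+1 = (((∑ i, m i) + 1 : ℕ) : ℝ) := by push_cast; ring
        _ ≤ ((∏ i, (m i + 1) : ℕ) : ℝ) := by exact_mod_cast hnat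
        _ = ∏ i, ((m i:ℝ)+1) := by push_cast; ring
    set u : Fin N → ℝ := fun i => ‖(ascPochhammer ℂ (m i)).eval (Function.update β z ((ε:ℂ)⁻¹) i)‖ *
        ‖Function.update t z ((ε:ℂ)*t z) i‖^(m i) / ((m i).factorial : ℝ) with hu
    have hu0 : ∀ i, 0 ≤ u i := fun i => by rw [hu]; positivity
    have hperi : ∀ i, ((m i:ℝ)+1)^D₁ * u i ≤ g i (m i) := by
      intro i
      rcases eq_or_ne i z with hi | hi
      · subst hi
        rw [hg]; dsimp only; rw [if_pos rfl, hu]; dsimp only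
        rw [Function.update_self, Function.update_self]
        have e1 : ‖(ascPochhammer ℂ (m z)).eval ((ε:ℂ)⁻¹)‖
            = ∏ j ∈ Finset.range (m z), (ε⁻¹+(j:ℝ)) := norm_poch_inv hε1 _
        have e2 : ‖(ε:ℂ) * t z‖ = ε * b := by
          rw [norm_mul, Complex.norm_real, Real.norm_eq_abs, _root_.abs_of_pos hε1, hb]
        have e3 : (∏ j ∈ Finset.range (m z), (ε⁻¹+(j:ℝ))) * (ε*b)^(m z)
            = (∏ j ∈ Finset.range (m z), (1+(j:ℝ)*ε)) * b^(m z) := by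
          rw [mul_pow, ← mul_assoc, prod_inv_mul_pow hε1]
        have e4 : ∏ j ∈ Finset.range (m z), (1+(j:ℝ)*ε)
            ≤ ∏ j ∈ Finset.range (m z), (1+(j:ℝ)*ε₀) := by
          apply Finset.prod_le_prod (fun j _ => by positivity)
          intro j _
          have h5 : (j:ℝ) * ε ≤ (j:ℝ) * ε₀ := mul_le_mul_of_nonneg_left hε2 (by positivity)
          linarith
        have hfac : (0:ℝ) < ((m z).factorial : ℝ) := by exact_mod_cast (m z).factorial_pos
        calc ((m z:ℝ)+1)^D₁ * (‖(ascPochhammer ℂ (m z)).eval ((ε:ℂ)⁻¹)‖ * ‖(ε:ℂ) * t z‖^(m z) /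
              ((m z).factorial : ℝ))
            = ((m z:ℝ)+1)^D₁ * ((∏ j ∈ Finset.range (m z), (1+(j:ℝ)*ε)) * b^(m z) /
              ((m z).factorial : ℝ)) := by rw [e1, e2, ← e3]
          _ ≤ ((m z:ℝ)+1)^D₁ * ((∏ j ∈ Finset.range (m z), (1+(j:ℝ)*ε₀)) * b^(m z) /
              ((m z).factorial : ℝ)) := by gcongr
      · rw [hg]; dsimp only; rw [if_neg hi, hu]; dsimp only
        rw [Function.update_of_ne hi, Function.update_of_ne hi]
    calc (‖(ascPochhammer ℂ (∑ i, m i)).eval α‖ / ‖(ascPochhammer ℂ (∑ i, m i)).eval γ‖) *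
          ∏ i, (‖(ascPochhammer ℂ (m i)).eval (Function.update β z ((ε:ℂ)⁻¹) i)‖ *
            ‖Function.update t z ((ε:ℂ)*t z) i‖^(m i) / ((m i).factorial : ℝ))
        = (‖(ascPochhammer ℂ (∑ i, m i)).eval α‖ / ‖(ascPochhammer ℂ (∑ i, m i)).eval γ‖) *
          ∏ i, u i := rfl
      _ ≤ (C₁ * (((∑ i, m i : ℕ):ℝ)+1)^D₁) * ∏ i, u i :=
          mul_le_mul_of_nonneg_right hAG (Finset.prod_nonneg fun i _ => hu0 i)
      _ ≤ (C₁ * ∏ i, ((m i:ℝ)+1)^D₁) * ∏ i, u i :=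
          mul_le_mul_of_nonneg_right (mul_le_mul_of_nonneg_left hMprod hC₁.le)
            (Finset.prod_nonneg fun i _ => hu0 i)
      _ = C₁ * ∏ i, (((m i:ℝ)+1)^D₁ * u i) := by rw [Finset.prod_mul_distrib]; ring
      _ ≤ C₁ * ∏ i, g i (m i) := by
          apply mul_le_mul_of_nonneg_left _ hC₁.le
          exact Finset.prod_le_prod (fun i _ => mul_nonneg (by positivity) (hu0 i))
            (fun i _ => hperi i)
  -- pointwise limit
  have hlim : ∀ m : Fin N → ℕ,
      Filter.Tendsto (fun ε : ℝ => lauricellaFDTerm α γ (Function.update β z ((ε:ℂ)⁻¹))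
        (Function.update t z ((ε:ℂ) * t z)) m) (𝓝[>] (0:ℝ)) (𝓝 (phiDTerm hN α γ β t m)) := by
    intro m
    have hcont : Continuous (fun ε : ℝ => ∏ j ∈ Finset.range (m z), (1+(j:ℂ)*(ε:ℂ))) := by
      apply continuous_finset_prod
      intro j _
      continuity
    have h0 : Filter.Tendsto (fun ε : ℝ => ∏ j ∈ Finset.range (m z), (1+(j:ℂ)*(ε:ℂ)))
        (𝓝 (0:ℝ)) (𝓝 1) := by
      have h := hcont.tendsto 0
      simpa using h
    have h0' : Filter.Tendsto (fun ε : ℝ => ∏ j ∈ Finset.range (m z), (1+(j:ℂ)*(ε:ℂ)))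
        (𝓝[>] (0:ℝ)) (𝓝 1) := h0.mono_left nhdsWithin_le_nhds
    have h2 := h0'.mul_const (phiDTerm hN α γ β t m)
    rw [one_mul] at h2
    apply h2.congr'
    filter_upwards [self_mem_nhdsWithin] with ε (hε : ε ∈ Set.Ioi 0)
    exact (stepA hN α γ β t (ne_of_gt hε) m).symm
  -- assemble
  have hsumbound : Summable (fun m : Fin N → ℕ => C₁ * ∏ i, g i (m i)) :=
    (summable_pi_prod N g hg0 hgsum).mul_left C₁
  apply tendsto_tsum_of_dominated_convergence hsumbound hlim
  filter_upwards [Ioc_mem_nhdsGT hε₀pos] with ε hε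
  exact hbound ε hε

/-- **Confluence of the hypergeometric seed function** `σ⁽¹⁾_{1,n} → −σ⁽²⁾_{1,n}`:
under the substitution `θ_1 ↦ 1/ε`, `θ_{N+2} ↦ θ_{N+2} − 1/ε`, `t_1 ↦ ε t_1`, as
`ε → 0⁺` one has
`(θ_{N+2} − 1/ε − n)(θ_{N+3} + n) (ε t_1) (1 − ε t_1)^{−(θ_{N+2} − 1/ε + θ_{N+3} + 1)}
  F_D(−θ_{N+3} − n, 1/ε, θ_2, …, θ_N, −θ_{N+1} − θ_{N+3} − n + 1; ε t_1, t_2, …, t_N)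
  → −(θ_{N+3} + n) t_1 e^{−t_1}
  Φ_D(−θ_{N+3} − n, θ_2, …, θ_N, −θ_{N+1} − θ_{N+3} − n + 1; t_1, …, t_N)`,
where `(1 − w)^c := exp (c · Log (1 − w))` with the principal logarithm.
Here `θ : ℕ → ℂ` carries the parameters `θ_2, …, θ_{N+3}` (entries with other indices
are unused), `t ⟨0, hN⟩` is `t_1`, and the slot `β i = θ (i+1)` for `i ≠ 0` furnishes
`θ_2, …, θ_N` (the slot `i = 0` is overwritten by `1/ε` in `F_D` and unused in `Φ_D`). -/
theorem seed_confluence (N : ℕ) (hN : 0 < N) (n : ℕ) (θ : ℕ → ℂ)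
    (hγ : ∀ k : ℕ, -θ (N + 1) - θ (N + 3) - (n : ℂ) + 1 ≠ -(k : ℂ))
    (t : Fin N → ℂ) (ht : ∀ i : Fin N, i ≠ ⟨0, hN⟩ → ‖t i‖ < 1) :
    Filter.Tendsto
      (fun ε : ℝ =>
        (θ (N + 2) - (ε : ℂ)⁻¹ - (n : ℂ)) * (θ (N + 3) + (n : ℂ)) *
          ((ε : ℂ) * t ⟨0, hN⟩) *
          Complex.exp (-(θ (N + 2) - (ε : ℂ)⁻¹ + θ (N + 3) + 1) *
            Complex.log (1 - (ε : ℂ) * t ⟨0, hN⟩)) *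
          ∑' m : Fin N → ℕ,
            lauricellaFDTerm (-θ (N + 3) - (n : ℂ))
              (-θ (N + 1) - θ (N + 3) - (n : ℂ) + 1)
              (Function.update (fun i : Fin N => θ ((i : ℕ) + 1)) ⟨0, hN⟩ ((ε : ℂ)⁻¹))
              (Function.update t ⟨0, hN⟩ ((ε : ℂ) * t ⟨0, hN⟩)) m)
      (nhdsWithin 0 (Set.Ioi 0))
      (nhds (-(θ (N + 3) + (n : ℂ)) * t ⟨0, hN⟩ * Complex.exp (-t ⟨0, hN⟩) *
        ∑' m : Fin N → ℕ,
          phiDTerm hN (-θ (N + 3) - (n : ℂ))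
            (-θ (N + 1) - θ (N + 3) - (n : ℂ) + 1)
            (fun i : Fin N => θ ((i : ℕ) + 1)) t m)) := by
  have hγ' : ∀ k : ℕ, (-θ (N+1) - θ (N+3) - (n:ℂ) + 1) + (k:ℂ) ≠ 0 := by
    intro k h
    exact hγ k (by linear_combination h)
  have Hsum := tsum_tendsto hN (-θ (N+3) - (n:ℂ)) (-θ (N+1) - θ (N+3) - (n:ℂ) + 1)
      (fun i : Fin N => θ ((i:ℕ)+1)) t hγ' ht
  have Hpre := prefactor_tendsto (θ (N+2) - (n:ℂ)) (θ (N+3) + (n:ℂ))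
      (θ (N+2) + θ (N+3) + 1) (t ⟨0,hN⟩)
  have H := Hpre.mul Hsum
  apply H.congr
  intro ε
  have hx : -(θ (N+2) + θ (N+3) + 1 - (ε:ℂ)⁻¹) = -(θ (N+2) - (ε:ℂ)⁻¹ + θ (N+3) + 1) := by
    ring
  rw [hx]
  ring
end

section
/- Conservation of the pairing tr(A_1 A_{N+2}) along the degenerate Schlesinger flow: let A_1, …, A_{N+2} : U → M_2(ℂ) be holomorphic maps solving the degenerate Schlesinger system S(1,…,1,2;N) on the connected open set U. Then there exists a constant c ∈ ℂ such that tr(A_1(t) A_{N+2}(t)) = c · t_1 for all t ∈ U. In particular the normalization tr(A_1 A_{N+2}) = t_1 θ_{N+2} is consistent with the flow. -/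
open Finset

/-- Entrywise partial derivative of a matrix-valued map in the `k`-th coordinate
direction. -/
noncomputable def pder {N : ℕ} (k : Fin N)
    (f : (Fin N → ℂ) → Matrix (Fin 2) (Fin 2) ℂ) (t : Fin N → ℂ) :
    Matrix (Fin 2) (Fin 2) ℂ :=
  Matrix.of fun a b => fderiv ℂ (fun s => f s a b) t (Pi.single k 1)

/-- Matrix commutator `[X, Y] = XY − YX`. -/
noncomputable def mComm (X Y : Matrix (Fin 2) (Fin 2) ℂ) : Matrix (Fin 2) (Fin 2) ℂ :=
  X * Y - Y * X

/-- The value `t_j` for the classical index `j ∈ {1, …, N+2}`: the coordinate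
`t ⟨j−1⟩` for `1 ≤ j ≤ N`, and the frozen values `t_{N+1} = 1`, `t_{N+2} = 0`. -/
def tval {N : ℕ} (t : Fin N → ℂ) (j : ℕ) : ℂ :=
  if h : 1 ≤ j ∧ j ≤ N then t ⟨j - 1, by omega⟩ else if j = N + 1 then 1 else 0

/-- The set of points `t ∈ ℂ^N` with `t_i ≠ 0`, `t_i ≠ 1` and `t_i ≠ t_j` for `i ≠ j`. -/
def goodDomain (N : ℕ) : Set (Fin N → ℂ) :=
  {t | (∀ i, t i ≠ 0 ∧ t i ≠ 1) ∧ ∀ i j, i ≠ j → t i ≠ t j}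

/-- `A 1, …, A (N+2) : U → M₂(ℂ)` solve the degenerate Schlesinger system
`S(1,…,1,2;N)`: each entry is holomorphic on `U`, and the partial differential
equations obtained by equating coefficients of `dt_1, …, dt_N` in
`dA_1 = Σ_{i=2}^{N+1} [A_i, A_1] d log t_i + (A_1 + [A_{N+2}, A_1]) d log t_1`,
`dA_j = Σ_{i=2,i≠j}^{N+2} [A_i, A_j] d log(t_j − t_i) + ([A_1,A_j]/t_j) d log(t_j/t_1)`
for `j = 2, …, N+1`, and
`dA_{N+2} = Σ_{i=2}^{N+1} (([A_i,A_1]/t_i) d log(t_i/t_1) + [A_i,A_{N+2}] d log t_i)`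
hold on `U` (with `t_{N+1} = 1`, `t_{N+2} = 0` held constant).  The coordinate
`k : Fin N` represents the variable `t_{k+1}`. -/
def SolvesDegSch {N : ℕ} (U : Set (Fin N → ℂ))
    (A : ℕ → (Fin N → ℂ) → Matrix (Fin 2) (Fin 2) ℂ) : Prop :=
  (∀ j ∈ Icc 1 (N + 2), ∀ a b : Fin 2, DifferentiableOn ℂ (fun t => A j t a b) U) ∧
  ∀ t ∈ U, ∀ k : Fin N,
    (pder k (A 1) t =
      if (k : ℕ) = 0 then (t k)⁻¹ • (A 1 t + mComm (A (N + 2) t) (A 1 t))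
      else (t k)⁻¹ • mComm (A ((k : ℕ) + 1) t) (A 1 t)) ∧
    (∀ j ∈ Icc 2 (N + 1),
      pder k (A j) t =
        if (k : ℕ) + 1 = j then
          (∑ i ∈ (Icc 2 (N + 2)).erase j,
            (tval t j - tval t i)⁻¹ • mComm (A i t) (A j t)) +
            ((tval t j) ^ 2)⁻¹ • mComm (A 1 t) (A j t)
        else if (k : ℕ) = 0 then
          (-(tval t j * t k)⁻¹) • mComm (A 1 t) (A j t)
        else (-(tval t j - t k)⁻¹) • mComm (A ((k : ℕ) + 1) t) (A j t)) ∧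
    (pder k (A (N + 2)) t =
      if (k : ℕ) = 0 then
        ∑ i ∈ Icc 2 (N + 1), (-(tval t i * t k)⁻¹) • mComm (A i t) (A 1 t)
      else ((t k) ^ 2)⁻¹ • mComm (A ((k : ℕ) + 1) t) (A 1 t) +
        (t k)⁻¹ • mComm (A ((k : ℕ) + 1) t) (A (N + 2) t))

lemma traceMul (X Y : Matrix (Fin 2) (Fin 2) ℂ) :
    (X * Y).trace = ∑ a : Fin 2, ∑ b : Fin 2, X a b * Y b a := by
  simp [Matrix.trace, Matrix.diag, Matrix.mul_apply]

lemma tr_rot (X Y Z : Matrix (Fin 2) (Fin 2) ℂ) : (X * Y * Z).trace = (Y * Z * X).trace := by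
  rw [mul_assoc, Matrix.trace_mul_comm]

lemma trB (X Y : Matrix (Fin 2) (Fin 2) ℂ) : (Y * mComm X Y).trace = 0 := by
  simp only [mComm, Matrix.mul_sub, Matrix.trace_sub, ← mul_assoc]
  rw [tr_rot Y Y X, sub_self]

lemma trC (X Y Z : Matrix (Fin 2) (Fin 2) ℂ) :
    (mComm X Y * Z).trace + (Y * mComm X Z).trace = 0 := by
  simp only [mComm, Matrix.sub_mul, Matrix.mul_sub, Matrix.trace_sub, ← mul_assoc]
  rw [tr_rot X Y Z]; ring

lemma trD (X Y : Matrix (Fin 2) (Fin 2) ℂ) : (mComm X Y * X).trace = 0 := by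
  simp only [mComm, Matrix.sub_mul, Matrix.trace_sub]
  rw [tr_rot X Y X, sub_self]

/-- **Conservation of the pairing `tr(A_1 A_{N+2})` along the degenerate Schlesinger
flow**: if `A_1, …, A_{N+2}` solve `S(1,…,1,2;N)` on a connected open `U` contained in
the good domain, then there is a constant `c ∈ ℂ` with
`tr(A_1(t) A_{N+2}(t)) = c · t_1` on `U` (so the normalisation
`tr(A_1 A_{N+2}) = t_1 θ_{N+2}` is consistent with the flow). -/
theorem degSch_pairing_conserved (N : ℕ) (hN : 0 < N) (U : Set (Fin N → ℂ))
    (hUopen : IsOpen U) (hUconn : IsConnected U) (hUsub : U ⊆ goodDomain N)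
    (A : ℕ → (Fin N → ℂ) → Matrix (Fin 2) (Fin 2) ℂ)
    (hsol : SolvesDegSch U A) :
    ∃ c : ℂ, ∀ t ∈ U, (A 1 t * A (N + 2) t).trace = c * t ⟨0, hN⟩ := by
  obtain ⟨hdiff, heq⟩ := hsol
  have h1mem : (1 : ℕ) ∈ Icc 1 (N + 2) := by simp
  have h2mem : (N + 2) ∈ Icc 1 (N + 2) := by simp
  set k0 : Fin N := ⟨0, hN⟩ with hk0def
  set F : (Fin N → ℂ) → ℂ := fun s => (A 1 s * A (N + 2) s).trace with hFdef
  set L : (Fin N → ℂ) → ((Fin N → ℂ) →L[ℂ] ℂ) := fun x =>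
    ∑ a : Fin 2, ∑ b : Fin 2,
      (A 1 x a b • fderiv ℂ (fun s => A (N + 2) s b a) x +
        A (N + 2) x b a • fderiv ℂ (fun s => A 1 s a b) x) with hLdef
  have hFd : ∀ x ∈ U, HasFDerivAt F (L x) x := by
    intro x hx
    have h1 : ∀ a b : Fin 2, HasFDerivAt (fun s => A 1 s a b)
        (fderiv ℂ (fun s => A 1 s a b) x) x := fun a b =>
      ((hdiff 1 h1mem a b).differentiableAt (hUopen.mem_nhds hx)).hasFDerivAt
    have h2 : ∀ a b : Fin 2, HasFDerivAt (fun s => A (N + 2) s a b)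
        (fderiv ℂ (fun s => A (N + 2) s a b) x) x := fun a b =>
      ((hdiff (N + 2) h2mem a b).differentiableAt (hUopen.mem_nhds hx)).hasFDerivAt
    have hsum : HasFDerivAt
        (fun s => ∑ a : Fin 2, ∑ b : Fin 2, A 1 s a b * A (N + 2) s b a) (L x) x := by
      rw [hLdef]
      exact HasFDerivAt.fun_sum fun a _ => HasFDerivAt.fun_sum fun b _ => (h1 a b).mul (h2 b a)
    have hfun : F = fun s => ∑ a : Fin 2, ∑ b : Fin 2, A 1 s a b * A (N + 2) s b a := by
      funext s; rw [hFdef]; exact traceMul _ _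
    rw [hfun]; exact hsum
  have hLval : ∀ x : Fin N → ℂ, ∀ k : Fin N,
      L x (Pi.single k 1) =
        (A 1 x * pder k (A (N + 2)) x).trace + (pder k (A 1) x * A (N + 2) x).trace := by
    intro x k
    rw [hLdef]
    simp only [ContinuousLinearMap.coe_sum', Finset.sum_apply,
      ContinuousLinearMap.add_apply, ContinuousLinearMap.coe_smul', Pi.smul_apply,
      smul_eq_mul]
    rw [traceMul, traceMul, ← Finset.sum_add_distrib]
    refine Finset.sum_congr rfl fun a _ => ?_
    rw [← Finset.sum_add_distrib]
    refine Finset.sum_congr rfl fun b _ => ?_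
    simp only [pder, Matrix.of_apply]
    ring
  have hkey : ∀ x ∈ U, ∀ k : Fin N,
      L x (Pi.single k 1) = if (k : ℕ) = 0 then (x k)⁻¹ * F x else 0 := by
    intro x hx k
    obtain ⟨hA1, -, hA3⟩ := heq x hx k
    rw [hLval x k, hA1, hA3]
    by_cases hk : (k : ℕ) = 0
    · rw [if_pos hk, if_pos hk, if_pos hk]
      rw [Matrix.mul_sum, Matrix.trace_sum]
      simp only [Matrix.mul_smul, Matrix.trace_smul, trB, smul_zero, Finset.sum_const_zero]
      rw [Matrix.smul_mul, Matrix.trace_smul, Matrix.add_mul, Matrix.trace_add, trD, add_zero]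
      rw [hFdef]
      simp [smul_eq_mul]
    · rw [if_neg hk, if_neg hk, if_neg hk]
      rw [Matrix.mul_add, Matrix.trace_add, Matrix.mul_smul, Matrix.mul_smul,
        Matrix.smul_mul, Matrix.trace_smul, Matrix.trace_smul, Matrix.trace_smul,
        trB, smul_zero, zero_add, ← smul_add, add_comm, trC, smul_zero]
  have hxne : ∀ x ∈ U, x k0 ≠ 0 := fun x hx => ((hUsub hx).1 k0).1
  set g : (Fin N → ℂ) → ℂ := fun s => F s * (s k0)⁻¹ with hgdef
  have hgd : ∀ x ∈ U, HasFDerivAt g (0 : (Fin N → ℂ) →L[ℂ] ℂ) x := by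
    intro x hx
    have hproj : HasFDerivAt (fun s : Fin N → ℂ => s k0)
        (ContinuousLinearMap.proj k0 : (Fin N → ℂ) →L[ℂ] ℂ) x :=
      (ContinuousLinearMap.proj (R := ℂ) (φ := fun _ : Fin N => ℂ) k0).hasFDerivAt
    have hinv : HasFDerivAt (fun s : Fin N → ℂ => (s k0)⁻¹)
        ((ContinuousLinearMap.smulRight (1 : ℂ →L[ℂ] ℂ) (-(x k0 ^ 2)⁻¹)).comp
          (ContinuousLinearMap.proj k0)) x :=
      (hasFDerivAt_inv (hxne x hx)).comp x hproj
    have hmul := (hFd x hx).mul hinv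
    have hzero : (F x • ((ContinuousLinearMap.smulRight (1 : ℂ →L[ℂ] ℂ)
          (-(x k0 ^ 2)⁻¹)).comp (ContinuousLinearMap.proj k0)) + (x k0)⁻¹ • L x) = 0 := by
      refine ContinuousLinearMap.coe_injective ?_
      refine (Pi.basisFun ℂ (Fin N)).ext fun i => ?_
      simp only [Pi.basisFun_apply, ContinuousLinearMap.coe_coe,
        ContinuousLinearMap.add_apply, ContinuousLinearMap.coe_smul', Pi.smul_apply,
        ContinuousLinearMap.coe_comp', Function.comp_apply,
        ContinuousLinearMap.proj_apply, ContinuousLinearMap.smulRight_apply,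
        ContinuousLinearMap.one_apply, ContinuousLinearMap.zero_apply,
        LinearMap.zero_apply, smul_eq_mul]
      rw [hkey x hx i]
      by_cases hi : (i : ℕ) = 0
      · have hik : i = k0 := Fin.ext hi
        rw [if_pos hi, hik, Pi.single_eq_same]
        have h0 : x k0 ≠ 0 := hxne x hx
        field_simp
        ring
      · have hik : k0 ≠ i := fun h => hi (by rw [← h])
        rw [if_neg hi, Pi.single_eq_of_ne hik]
        ring
    rw [← hzero]
    exact hmul
  have hloc : ∀ x ∈ U, ∃ r > 0, Metric.ball x r ⊆ U ∧
      ∀ y ∈ Metric.ball x r, g y = g x := by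
    intro x hx
    obtain ⟨r, hr, hball⟩ := Metric.isOpen_iff.1 hUopen x hx
    refine ⟨r, hr, hball, fun y hy => ?_⟩
    have hconv : Convex ℝ (Metric.ball x r) := convex_ball x r
    have hdiff' : DifferentiableOn ℂ g (Metric.ball x r) := fun z hz =>
      ((hgd z (hball hz)).differentiableAt).differentiableWithinAt
    have hzero : ∀ z ∈ Metric.ball x r, fderivWithin ℂ g (Metric.ball x r) z = 0 := by
      intro z hz
      rw [fderivWithin_of_isOpen Metric.isOpen_ball hz, (hgd z (hball hz)).fderiv]
    exact hconv.is_const_of_fderivWithin_eq_zero hdiff' hzero hy (Metric.mem_ball_self hr)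
  obtain ⟨t0, ht0⟩ := hUconn.nonempty
  have hgood : ∀ t ∈ U, g t = g t0 := by
    intro t ht
    by_contra hne
    have hSopen : IsOpen {x | x ∈ U ∧ g x = g t0} := by
      rw [Metric.isOpen_iff]
      rintro x ⟨hxU, hxg⟩
      obtain ⟨r, hr, hball, hconst⟩ := hloc x hxU
      exact ⟨r, hr, fun y hy => ⟨hball hy, (hconst y hy).trans hxg⟩⟩
    have hTopen : IsOpen {x | x ∈ U ∧ g x ≠ g t0} := by
      rw [Metric.isOpen_iff]
      rintro x ⟨hxU, hxg⟩
      obtain ⟨r, hr, hball, hconst⟩ := hloc x hxU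
      exact ⟨r, hr, fun y hy => ⟨hball hy, fun h => hxg ((hconst y hy).symm.trans h)⟩⟩
    obtain ⟨z, hzU, ⟨-, hz1⟩, ⟨-, hz2⟩⟩ := hUconn.isPreconnected _ _ hSopen hTopen
      (fun x hx => by by_cases h : g x = g t0
                      · exact Or.inl ⟨hx, h⟩
                      · exact Or.inr ⟨hx, h⟩)
      ⟨t0, ht0, ht0, rfl⟩ ⟨t, ht, ht, hne⟩
    exact hz2 hz1
  refine ⟨g t0, fun t ht => ?_⟩
  have h1 := hgood t ht
  have h0 : t k0 ≠ 0 := hxne t ht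
  have : F t = g t0 * t k0 := by
    rw [hgdef] at h1
    field_simp at h1
    rw [h1]; ring
  exact this
end
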